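/- Let ψ₁, ψ₂, ψ₃, ψ₄ : ℝ → ℂ be twice continuously differentiable with ψ₁(y) and ψ₄(y) purely imaginary for all y, and define the 3×3 matrix-valued function m₁(y) with rows (ψ₁, ψ₂, ψ₃), (-conj ψ₂, ψ₁, -conj ψ₃), (-conj ψ₃, ψ₃, ψ₄). For (y,z) ∈ ℝ × ℂ define 𝒰(y,z) = -iz·Λ + i·[Λ, m₁(y)] and 𝒱(y,z) = 4iz²·Λ - 4iz·[Λ, m₁(y)] + 4·m₁'(y) - iy·Λ, where [A,B] = AB - BA. Then the zero-curvature equation ∂_z 𝒰 - ∂_y 𝒱 + [𝒰, 𝒱] = 0 holds for all y ∈ ℝ and all z ∈ ℂ if and only if the four scalar equations ψ₁'' + 2i·(ψ₃·conj ψ₃)' = 0, ψ₂'' - 4i·ψ₃·ψ₃' = 0, ψ₃'' - 2i·conj(ψ₃)·ψ₂' + ψ₃·(y + 2i·ψ₁' - 2i·ψ₄') = 0, and ψ₄'' - 4i·(ψ₃·conj ψ₃)' = 0 hold for all y ∈ ℝ. -/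

import Mathlib

open Complex Matrix ComplexConjugate

noncomputable section

/-- The diagonal matrix `Λ = diag(1,1,-1)`. -/
def Lam : Matrix (Fin 3) (Fin 3) ℂ := !![1, 0, 0; 0, 1, 0; 0, 0, -1]

/-- The coefficient matrix `m₁(y)` built from the scalar functions `ψ₁, ψ₂, ψ₃, ψ₄`. -/
def m1 (ψ₁ ψ₂ ψ₃ ψ₄ : ℝ → ℂ) (y : ℝ) : Matrix (Fin 3) (Fin 3) ℂ :=
  !![ψ₁ y, ψ₂ y, ψ₃ y;
     -conj (ψ₂ y), ψ₁ y, -conj (ψ₃ y);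
     -conj (ψ₃ y), ψ₃ y, ψ₄ y]

/-- Entrywise `y`-derivative of `m₁`. -/
def m1' (ψ₁ ψ₂ ψ₃ ψ₄ : ℝ → ℂ) (y : ℝ) : Matrix (Fin 3) (Fin 3) ℂ :=
  Matrix.of fun i j => deriv (fun y' => m1 ψ₁ ψ₂ ψ₃ ψ₄ y' i j) y

/-- `𝒰(y,z) = -iz·Λ + i·[Λ, m₁(y)]`. -/
def Umat (ψ₁ ψ₂ ψ₃ ψ₄ : ℝ → ℂ) (y : ℝ) (z : ℂ) : Matrix (Fin 3) (Fin 3) ℂ :=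
  (-Complex.I * z) • Lam +
    Complex.I • (Lam * m1 ψ₁ ψ₂ ψ₃ ψ₄ y - m1 ψ₁ ψ₂ ψ₃ ψ₄ y * Lam)

/-- `𝒱(y,z) = 4iz²·Λ - 4iz·[Λ, m₁(y)] + 4·m₁'(y) - iy·Λ`. -/
def Vmat (ψ₁ ψ₂ ψ₃ ψ₄ : ℝ → ℂ) (y : ℝ) (z : ℂ) : Matrix (Fin 3) (Fin 3) ℂ :=
  (4 * Complex.I * z ^ 2) • Lam -
    (4 * Complex.I * z) • (Lam * m1 ψ₁ ψ₂ ψ₃ ψ₄ y - m1 ψ₁ ψ₂ ψ₃ ψ₄ y * Lam) +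
    (4 : ℂ) • m1' ψ₁ ψ₂ ψ₃ ψ₄ y - (Complex.I * (y : ℂ)) • Lam

/-- Entrywise `z`-derivative of `𝒰`. -/
def DzU (ψ₁ ψ₂ ψ₃ ψ₄ : ℝ → ℂ) (y : ℝ) (z : ℂ) : Matrix (Fin 3) (Fin 3) ℂ :=
  Matrix.of fun i j => deriv (fun z' : ℂ => Umat ψ₁ ψ₂ ψ₃ ψ₄ y z' i j) z

/-- Entrywise `y`-derivative of `𝒱`. -/
def DyV (ψ₁ ψ₂ ψ₃ ψ₄ : ℝ → ℂ) (y : ℝ) (z : ℂ) : Matrix (Fin 3) (Fin 3) ℂ :=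
  Matrix.of fun i j => deriv (fun y' : ℝ => Vmat ψ₁ ψ₂ ψ₃ ψ₄ y' z i j) y

/-! ### Auxiliary definitions and lemmas -/

set_option maxHeartbeats 1000000

/-- Entrywise second `y`-derivative of `m₁`. -/
def m2 (ψ₁ ψ₂ ψ₃ ψ₄ : ℝ → ℂ) (y : ℝ) : Matrix (Fin 3) (Fin 3) ℂ :=
  Matrix.of fun i j => deriv (fun y' => m1' ψ₁ ψ₂ ψ₃ ψ₄ y' i j) y

/-- The `z`-independent matrix to which the zero-curvature combination reduces. -/
def Rm (ψ₁ ψ₂ ψ₃ ψ₄ : ℝ → ℂ) (y : ℝ) : Matrix (Fin 3) (Fin 3) ℂ :=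
  (-4 : ℂ) • m2 ψ₁ ψ₂ ψ₃ ψ₄ y +
    (4 * Complex.I) •
      ((Lam * m1 ψ₁ ψ₂ ψ₃ ψ₄ y - m1 ψ₁ ψ₂ ψ₃ ψ₄ y * Lam) * m1' ψ₁ ψ₂ ψ₃ ψ₄ y -
        m1' ψ₁ ψ₂ ψ₃ ψ₄ y * (Lam * m1 ψ₁ ψ₂ ψ₃ ψ₄ y - m1 ψ₁ ψ₂ ψ₃ ψ₄ y * Lam)) +
    ((y : ℂ)) •
      ((Lam * m1 ψ₁ ψ₂ ψ₃ ψ₄ y - m1 ψ₁ ψ₂ ψ₃ ψ₄ y * Lam) * Lam -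
        Lam * (Lam * m1 ψ₁ ψ₂ ψ₃ ψ₄ y - m1 ψ₁ ψ₂ ψ₃ ψ₄ y * Lam))

lemma deriv_conj (f : ℝ → ℂ) (x : ℝ) :
    deriv (fun y => conj (f y)) x = conj (deriv f x) := deriv.star

lemma comm_identity (L M M' M₂ : Matrix (Fin 3) (Fin 3) ℂ) (yc z : ℂ) :
    (-Complex.I) • L -
      ((-(4 * Complex.I * z)) • (L * M' - M' * L) + (4 : ℂ) • M₂ - Complex.I • L) +
      (((-Complex.I * z) • L + Complex.I • (L * M - M * L)) *
        ((4 * Complex.I * z ^ 2) • L - (4 * Complex.I * z) • (L * M - M * L) +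
          (4 : ℂ) • M' - (Complex.I * yc) • L) -
       ((4 * Complex.I * z ^ 2) • L - (4 * Complex.I * z) • (L * M - M * L) +
          (4 : ℂ) • M' - (Complex.I * yc) • L) *
        ((-Complex.I * z) • L + Complex.I • (L * M - M * L)))
    = (-4 : ℂ) • M₂ +
        (4 * Complex.I) • ((L * M - M * L) * M' - M' * (L * M - M * L)) +
        yc • ((L * M - M * L) * L - L * (L * M - M * L)) := by
  ext i j
  simp only [Matrix.mul_apply, Fin.sum_univ_three, Matrix.add_apply, Matrix.sub_apply,
    Matrix.smul_apply, smul_eq_mul]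
  ring_nf
  simp only [Complex.I_sq]
  ring

lemma m1'_eq (ψ₁ ψ₂ ψ₃ ψ₄ : ℝ → ℂ) :
    m1' ψ₁ ψ₂ ψ₃ ψ₄ = fun y =>
      !![deriv ψ₁ y, deriv ψ₂ y, deriv ψ₃ y;
         -conj (deriv ψ₂ y), deriv ψ₁ y, -conj (deriv ψ₃ y);
         -conj (deriv ψ₃ y), deriv ψ₃ y, deriv ψ₄ y] := by
  funext y
  ext i j
  fin_cases i <;> fin_cases j <;>
    simp [m1', m1, deriv_conj]

lemma m2_eq (ψ₁ ψ₂ ψ₃ ψ₄ : ℝ → ℂ) :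
    m2 ψ₁ ψ₂ ψ₃ ψ₄ = fun y =>
      !![deriv (deriv ψ₁) y, deriv (deriv ψ₂) y, deriv (deriv ψ₃) y;
         -conj (deriv (deriv ψ₂) y), deriv (deriv ψ₁) y, -conj (deriv (deriv ψ₃) y);
         -conj (deriv (deriv ψ₃) y), deriv (deriv ψ₃) y, deriv (deriv ψ₄) y] := by
  funext y
  ext i j
  fin_cases i <;> fin_cases j <;>
    simp [m2, m1'_eq, deriv_conj]

lemma m1_entry_diff (ψ₁ ψ₂ ψ₃ ψ₄ : ℝ → ℂ)
    (h₁ : Differentiable ℝ ψ₁) (h₂ : Differentiable ℝ ψ₂)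
    (h₃ : Differentiable ℝ ψ₃) (h₄ : Differentiable ℝ ψ₄) (i j : Fin 3) :
    Differentiable ℝ (fun y' => m1 ψ₁ ψ₂ ψ₃ ψ₄ y' i j) := by
  fin_cases i <;> fin_cases j <;> simp only [m1] <;>
    first
      | exact h₁ | exact h₂ | exact h₃ | exact h₄
      | exact h₂.star.neg | exact h₃.star.neg

lemma m1_hasDerivAt (ψ₁ ψ₂ ψ₃ ψ₄ : ℝ → ℂ)
    (h₁ : Differentiable ℝ ψ₁) (h₂ : Differentiable ℝ ψ₂)
    (h₃ : Differentiable ℝ ψ₃) (h₄ : Differentiable ℝ ψ₄)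
    (y : ℝ) (i j : Fin 3) :
    HasDerivAt (fun y' => m1 ψ₁ ψ₂ ψ₃ ψ₄ y' i j) (m1' ψ₁ ψ₂ ψ₃ ψ₄ y i j) y :=
  ((m1_entry_diff ψ₁ ψ₂ ψ₃ ψ₄ h₁ h₂ h₃ h₄ i j) y).hasDerivAt

lemma m1'_entry_diff (ψ₁ ψ₂ ψ₃ ψ₄ : ℝ → ℂ)
    (h₁ : Differentiable ℝ (deriv ψ₁)) (h₂ : Differentiable ℝ (deriv ψ₂))
    (h₃ : Differentiable ℝ (deriv ψ₃)) (h₄ : Differentiable ℝ (deriv ψ₄)) (i j : Fin 3) :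
    Differentiable ℝ (fun y' => m1' ψ₁ ψ₂ ψ₃ ψ₄ y' i j) := by
  simp only [m1'_eq]
  fin_cases i <;> fin_cases j <;>
    first
      | exact h₁ | exact h₂ | exact h₃ | exact h₄
      | exact h₂.star.neg | exact h₃.star.neg

lemma m1'_hasDerivAt (ψ₁ ψ₂ ψ₃ ψ₄ : ℝ → ℂ)
    (h₁ : Differentiable ℝ (deriv ψ₁)) (h₂ : Differentiable ℝ (deriv ψ₂))
    (h₃ : Differentiable ℝ (deriv ψ₃)) (h₄ : Differentiable ℝ (deriv ψ₄))
    (y : ℝ) (i j : Fin 3) :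
    HasDerivAt (fun y' => m1' ψ₁ ψ₂ ψ₃ ψ₄ y' i j) (m2 ψ₁ ψ₂ ψ₃ ψ₄ y i j) y :=
  ((m1'_entry_diff ψ₁ ψ₂ ψ₃ ψ₄ h₁ h₂ h₃ h₄ i j) y).hasDerivAt

lemma DzU_eq (ψ₁ ψ₂ ψ₃ ψ₄ : ℝ → ℂ) (y : ℝ) (z : ℂ) :
    DzU ψ₁ ψ₂ ψ₃ ψ₄ y z = (-Complex.I) • Lam := by
  ext i j
  simp only [DzU, Matrix.of_apply]
  have hfun : (fun z' : ℂ => Umat ψ₁ ψ₂ ψ₃ ψ₄ y z' i j) =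
      fun z' : ℂ => (-Complex.I * Lam i j) * z' +
        Complex.I * ((Lam * m1 ψ₁ ψ₂ ψ₃ ψ₄ y) i j - (m1 ψ₁ ψ₂ ψ₃ ψ₄ y * Lam) i j) := by
    funext z'
    simp only [Umat, Matrix.add_apply, Matrix.smul_apply, Matrix.sub_apply, smul_eq_mul]
    ring
  rw [hfun]
  have h := ((hasDerivAt_id z).const_mul (-Complex.I * Lam i j)).add_const
    (Complex.I * ((Lam * m1 ψ₁ ψ₂ ψ₃ ψ₄ y) i j - (m1 ψ₁ ψ₂ ψ₃ ψ₄ y * Lam) i j))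
  simp only [id_eq] at h
  rw [h.deriv]
  simp [Matrix.smul_apply, smul_eq_mul]

lemma DyV_eq (ψ₁ ψ₂ ψ₃ ψ₄ : ℝ → ℂ)
    (h₁ : Differentiable ℝ ψ₁) (h₂ : Differentiable ℝ ψ₂)
    (h₃ : Differentiable ℝ ψ₃) (h₄ : Differentiable ℝ ψ₄)
    (h₁' : Differentiable ℝ (deriv ψ₁)) (h₂' : Differentiable ℝ (deriv ψ₂))
    (h₃' : Differentiable ℝ (deriv ψ₃)) (h₄' : Differentiable ℝ (deriv ψ₄))
    (y : ℝ) (z : ℂ) :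
    DyV ψ₁ ψ₂ ψ₃ ψ₄ y z =
      (-(4 * Complex.I * z)) • (Lam * m1' ψ₁ ψ₂ ψ₃ ψ₄ y - m1' ψ₁ ψ₂ ψ₃ ψ₄ y * Lam) +
        (4 : ℂ) • m2 ψ₁ ψ₂ ψ₃ ψ₄ y - Complex.I • Lam := by
  have Hm := m1_hasDerivAt ψ₁ ψ₂ ψ₃ ψ₄ h₁ h₂ h₃ h₄ y
  have Hm' := m1'_hasDerivAt ψ₁ ψ₂ ψ₃ ψ₄ h₁' h₂' h₃' h₄' y
  ext i j
  simp only [DyV, Matrix.of_apply]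
  have hfun : (fun y' : ℝ => Vmat ψ₁ ψ₂ ψ₃ ψ₄ y' z i j) =
      fun y' : ℝ =>
        4 * Complex.I * z ^ 2 * Lam i j -
          4 * Complex.I * z *
            ((Lam i 0 * m1 ψ₁ ψ₂ ψ₃ ψ₄ y' 0 j + Lam i 1 * m1 ψ₁ ψ₂ ψ₃ ψ₄ y' 1 j +
                Lam i 2 * m1 ψ₁ ψ₂ ψ₃ ψ₄ y' 2 j) -
              (m1 ψ₁ ψ₂ ψ₃ ψ₄ y' i 0 * Lam 0 j + m1 ψ₁ ψ₂ ψ₃ ψ₄ y' i 1 * Lam 1 j +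
                m1 ψ₁ ψ₂ ψ₃ ψ₄ y' i 2 * Lam 2 j)) +
          4 * m1' ψ₁ ψ₂ ψ₃ ψ₄ y' i j - Complex.I * (y' : ℂ) * Lam i j := by
    funext y'
    simp only [Vmat, Matrix.mul_apply, Fin.sum_univ_three, Matrix.sub_apply, Matrix.add_apply,
      Matrix.smul_apply, smul_eq_mul]
    try ring
  rw [hfun]
  have T1 : HasDerivAt
      (fun y' : ℝ => Lam i 0 * m1 ψ₁ ψ₂ ψ₃ ψ₄ y' 0 j + Lam i 1 * m1 ψ₁ ψ₂ ψ₃ ψ₄ y' 1 j +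
        Lam i 2 * m1 ψ₁ ψ₂ ψ₃ ψ₄ y' 2 j)
      (Lam i 0 * m1' ψ₁ ψ₂ ψ₃ ψ₄ y 0 j + Lam i 1 * m1' ψ₁ ψ₂ ψ₃ ψ₄ y 1 j +
        Lam i 2 * m1' ψ₁ ψ₂ ψ₃ ψ₄ y 2 j) y :=
    (((Hm 0 j).const_mul _).add ((Hm 1 j).const_mul _)).add ((Hm 2 j).const_mul _)
  have T2 : HasDerivAt
      (fun y' : ℝ => m1 ψ₁ ψ₂ ψ₃ ψ₄ y' i 0 * Lam 0 j + m1 ψ₁ ψ₂ ψ₃ ψ₄ y' i 1 * Lam 1 j +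
        m1 ψ₁ ψ₂ ψ₃ ψ₄ y' i 2 * Lam 2 j)
      (m1' ψ₁ ψ₂ ψ₃ ψ₄ y i 0 * Lam 0 j + m1' ψ₁ ψ₂ ψ₃ ψ₄ y i 1 * Lam 1 j +
        m1' ψ₁ ψ₂ ψ₃ ψ₄ y i 2 * Lam 2 j) y :=
    (((Hm i 0).mul_const _).add ((Hm i 1).mul_const _)).add ((Hm i 2).mul_const _)
  have T3 : HasDerivAt (fun y' : ℝ => Complex.I * (y' : ℂ) * Lam i j)
      (Complex.I * Lam i j) y := by
    have h0 : HasDerivAt (fun y' : ℝ => ((y' : ℂ))) 1 y := by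
      simpa using (hasDerivAt_id y).ofReal_comp
    simpa using (h0.const_mul Complex.I).mul_const (Lam i j)
  have H := (((hasDerivAt_const y (4 * Complex.I * z ^ 2 * Lam i j)).sub
      ((T1.sub T2).const_mul (4 * Complex.I * z))).add ((Hm' i j).const_mul 4)).sub T3
  refine H.deriv.trans ?_
  simp only [Matrix.add_apply, Matrix.sub_apply, Matrix.smul_apply, smul_eq_mul,
    Matrix.mul_apply, Fin.sum_univ_three]
  ring

/-- The zero-curvature combination is `z`-independent and equals `Rm`. -/
lemma key_eq (ψ₁ ψ₂ ψ₃ ψ₄ : ℝ → ℂ)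
    (h₁ : Differentiable ℝ ψ₁) (h₂ : Differentiable ℝ ψ₂)
    (h₃ : Differentiable ℝ ψ₃) (h₄ : Differentiable ℝ ψ₄)
    (h₁' : Differentiable ℝ (deriv ψ₁)) (h₂' : Differentiable ℝ (deriv ψ₂))
    (h₃' : Differentiable ℝ (deriv ψ₃)) (h₄' : Differentiable ℝ (deriv ψ₄))
    (y : ℝ) (z : ℂ) :
    DzU ψ₁ ψ₂ ψ₃ ψ₄ y z - DyV ψ₁ ψ₂ ψ₃ ψ₄ y z +
      (Umat ψ₁ ψ₂ ψ₃ ψ₄ y z * Vmat ψ₁ ψ₂ ψ₃ ψ₄ y z -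
        Vmat ψ₁ ψ₂ ψ₃ ψ₄ y z * Umat ψ₁ ψ₂ ψ₃ ψ₄ y z) = Rm ψ₁ ψ₂ ψ₃ ψ₄ y := by
  rw [DzU_eq, DyV_eq ψ₁ ψ₂ ψ₃ ψ₄ h₁ h₂ h₃ h₄ h₁' h₂' h₃' h₄']
  simp only [Umat, Vmat, Rm]
  exact comm_identity Lam (m1 ψ₁ ψ₂ ψ₃ ψ₄ y) (m1' ψ₁ ψ₂ ψ₃ ψ₄ y) (m2 ψ₁ ψ₂ ψ₃ ψ₄ y) (y : ℂ) z

/-- Explicit form of `Rm`. -/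
lemma Rm_explicit (ψ₁ ψ₂ ψ₃ ψ₄ : ℝ → ℂ) (y : ℝ) :
    Rm ψ₁ ψ₂ ψ₃ ψ₄ y =
      !![-4 * deriv (deriv ψ₁) y - 8 * Complex.I * ψ₃ y * conj (deriv ψ₃ y) -
           8 * Complex.I * conj (ψ₃ y) * deriv ψ₃ y,
         -4 * deriv (deriv ψ₂) y + 16 * Complex.I * ψ₃ y * deriv ψ₃ y,
         -4 * deriv (deriv ψ₃) y + 8 * Complex.I * ψ₃ y * deriv ψ₄ y - 4 * (y : ℂ) * ψ₃ y -
           8 * Complex.I * deriv ψ₁ y * ψ₃ y + 8 * Complex.I * deriv ψ₂ y * conj (ψ₃ y);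
         4 * conj (deriv (deriv ψ₂) y) + 16 * Complex.I * conj (ψ₃ y) * conj (deriv ψ₃ y),
         -4 * deriv (deriv ψ₁) y - 8 * Complex.I * ψ₃ y * conj (deriv ψ₃ y) -
           8 * Complex.I * conj (ψ₃ y) * deriv ψ₃ y,
         4 * conj (deriv (deriv ψ₃) y) - 8 * Complex.I * conj (ψ₃ y) * deriv ψ₄ y +
           4 * (y : ℂ) * conj (ψ₃ y) + 8 * Complex.I * ψ₃ y * conj (deriv ψ₂ y) +
           8 * Complex.I * deriv ψ₁ y * conj (ψ₃ y);
         4 * conj (deriv (deriv ψ₃) y) - 8 * Complex.I * conj (ψ₃ y) * deriv ψ₄ y +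
           4 * (y : ℂ) * conj (ψ₃ y) + 8 * Complex.I * ψ₃ y * conj (deriv ψ₂ y) +
           8 * Complex.I * deriv ψ₁ y * conj (ψ₃ y),
         -4 * deriv (deriv ψ₃) y + 8 * Complex.I * ψ₃ y * deriv ψ₄ y - 4 * (y : ℂ) * ψ₃ y -
           8 * Complex.I * deriv ψ₁ y * ψ₃ y + 8 * Complex.I * deriv ψ₂ y * conj (ψ₃ y),
         -4 * deriv (deriv ψ₄) y + 16 * Complex.I * conj (ψ₃ y) * deriv ψ₃ y +
           16 * Complex.I * ψ₃ y * conj (deriv ψ₃ y)] := by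
  rw [Rm, m1'_eq, m2_eq]
  ext i j
  fin_cases i <;> fin_cases j <;>
    simp [Lam, m1, Matrix.mul_apply, Fin.sum_univ_three] <;>
    ring

lemma contDiff_two_facts (f : ℝ → ℂ) (hf : ContDiff ℝ 2 f) :
    Differentiable ℝ f ∧ Differentiable ℝ (deriv f) := by
  have hf' : ContDiff ℝ ((1 : WithTop ℕ∞) + 1) f := by
    rw [one_add_one_eq_two]; exact hf
  obtain ⟨hdiff, -, hder⟩ := contDiff_succ_iff_deriv.mp hf'
  exact ⟨hdiff, hder.differentiable one_ne_zero⟩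

/-- The zero-curvature equation `∂_z𝒰 - ∂_y𝒱 + [𝒰,𝒱] = 0` holds for all `y ∈ ℝ`, `z ∈ ℂ`
iff the four scalar equations for `ψ₁, ψ₂, ψ₃, ψ₄` hold for all `y ∈ ℝ`. -/
theorem painleveII_zero_curvature (ψ₁ ψ₂ ψ₃ ψ₄ : ℝ → ℂ)
    (h₁ : ContDiff ℝ 2 ψ₁) (h₂ : ContDiff ℝ 2 ψ₂)
    (h₃ : ContDiff ℝ 2 ψ₃) (h₄ : ContDiff ℝ 2 ψ₄)
    (him₁ : ∀ y : ℝ, (ψ₁ y).re = 0) (him₄ : ∀ y : ℝ, (ψ₄ y).re = 0) :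
    (∀ (y : ℝ) (z : ℂ),
        DzU ψ₁ ψ₂ ψ₃ ψ₄ y z - DyV ψ₁ ψ₂ ψ₃ ψ₄ y z +
          (Umat ψ₁ ψ₂ ψ₃ ψ₄ y z * Vmat ψ₁ ψ₂ ψ₃ ψ₄ y z -
            Vmat ψ₁ ψ₂ ψ₃ ψ₄ y z * Umat ψ₁ ψ₂ ψ₃ ψ₄ y z) = 0) ↔
    ((∀ y : ℝ, deriv (deriv ψ₁) y +
        2 * Complex.I * deriv (fun y' => ψ₃ y' * conj (ψ₃ y')) y = 0) ∧
     (∀ y : ℝ, deriv (deriv ψ₂) y - 4 * Complex.I * ψ₃ y * deriv ψ₃ y = 0) ∧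
     (∀ y : ℝ, deriv (deriv ψ₃) y - 2 * Complex.I * conj (ψ₃ y) * deriv ψ₂ y +
        ψ₃ y * ((y : ℂ) + 2 * Complex.I * deriv ψ₁ y - 2 * Complex.I * deriv ψ₄ y) = 0) ∧
     (∀ y : ℝ, deriv (deriv ψ₄) y -
        4 * Complex.I * deriv (fun y' => ψ₃ y' * conj (ψ₃ y')) y = 0)) := by
  obtain ⟨hd₁, hd₁'⟩ := contDiff_two_facts ψ₁ h₁
  obtain ⟨hd₂, hd₂'⟩ := contDiff_two_facts ψ₂ h₂
  obtain ⟨hd₃, hd₃'⟩ := contDiff_two_facts ψ₃ h₃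
  obtain ⟨hd₄, hd₄'⟩ := contDiff_two_facts ψ₄ h₄
  have hQ : ∀ y : ℝ, deriv (fun y' => ψ₃ y' * conj (ψ₃ y')) y =
      deriv ψ₃ y * conj (ψ₃ y) + ψ₃ y * conj (deriv ψ₃ y) := fun y =>
    ((hd₃ y).hasDerivAt.mul ((hd₃ y).hasDerivAt.star)).deriv
  have ha' : ∀ t : ℝ, conj (deriv ψ₁ t) = -deriv ψ₁ t := by
    intro t
    have hfun : (fun s => conj (ψ₁ s)) = fun s => -ψ₁ s := by
      funext s
      apply Complex.ext <;> simp [him₁ s]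
    calc conj (deriv ψ₁ t) = deriv (fun s => conj (ψ₁ s)) t := (deriv_conj ψ₁ t).symm
      _ = deriv (fun s => -ψ₁ s) t := by rw [hfun]
      _ = -deriv ψ₁ t := by simp
  have hd' : ∀ t : ℝ, conj (deriv ψ₄ t) = -deriv ψ₄ t := by
    intro t
    have hfun : (fun s => conj (ψ₄ s)) = fun s => -ψ₄ s := by
      funext s
      apply Complex.ext <;> simp [him₄ s]
    calc conj (deriv ψ₄ t) = deriv (fun s => conj (ψ₄ s)) t := (deriv_conj ψ₄ t).symm
      _ = deriv (fun s => -ψ₄ s) t := by rw [hfun]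
      _ = -deriv ψ₄ t := by simp
  constructor
  · intro H
    have hRm : ∀ y : ℝ, Rm ψ₁ ψ₂ ψ₃ ψ₄ y = 0 := fun y => by
      rw [← key_eq ψ₁ ψ₂ ψ₃ ψ₄ hd₁ hd₂ hd₃ hd₄ hd₁' hd₂' hd₃' hd₄' y 0]
      exact H y 0
    refine ⟨fun y => ?_, fun y => ?_, fun y => ?_, fun y => ?_⟩ <;>
      · have hE := hRm y
        rw [Rm_explicit] at hE
        first
        | · rw [hQ y]
            have h00 := (Matrix.ext_iff.mpr hE) 0 0
            simp at h00
            linear_combination (-1/4 : ℂ) * h00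
        | · have h01 := (Matrix.ext_iff.mpr hE) 0 1
            simp at h01
            linear_combination (-1/4 : ℂ) * h01
        | · have h02 := (Matrix.ext_iff.mpr hE) 0 2
            simp at h02
            linear_combination (-1/4 : ℂ) * h02
        | · rw [hQ y]
            have h22 := (Matrix.ext_iff.mpr hE) 2 2
            simp at h22
            linear_combination (-1/4 : ℂ) * h22
  · rintro ⟨H1, H2, H3, H4⟩ y z
    rw [key_eq ψ₁ ψ₂ ψ₃ ψ₄ hd₁ hd₂ hd₃ hd₄ hd₁' hd₂' hd₃' hd₄' y z, Rm_explicit]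
    have h1 := H1 y
    rw [hQ y] at h1
    have h4 := H4 y
    rw [hQ y] at h4
    have h2 := H2 y
    have h3 := H3 y
    have h2c : conj (deriv (deriv ψ₂) y) +
        4 * Complex.I * conj (ψ₃ y) * conj (deriv ψ₃ y) = 0 := by
      have hc := congrArg (starRingEnd ℂ) h2
      simp only [_root_.map_sub, _root_.map_mul, _root_.map_zero, Complex.conj_I, map_ofNat] at hc
      linear_combination hc
    have h3c : conj (deriv (deriv ψ₃) y) + 2 * Complex.I * ψ₃ y * conj (deriv ψ₂ y) +
        conj (ψ₃ y) * ((y : ℂ) + 2 * Complex.I * deriv ψ₁ y -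
          2 * Complex.I * deriv ψ₄ y) = 0 := by
      have hc := congrArg (starRingEnd ℂ) h3
      simp only [_root_.map_add, _root_.map_sub, _root_.map_mul, _root_.map_zero, Complex.conj_I,
        map_ofNat, Complex.conj_ofReal, Complex.conj_conj, ha', hd'] at hc
      linear_combination hc
    ext i j
    fin_cases i <;> fin_cases j <;>
      simp <;>
      first
      | linear_combination (-4 : ℂ) * h1
      | linear_combination (-4 : ℂ) * h2
      | linear_combination (-4 : ℂ) * h3
      | linear_combination (-4 : ℂ) * h4
      | linear_combination (4 : ℂ) * h2c
      | linear_combination (4 : ℂ) * h3c
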